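/- Let τ > 0 and τ' > 0 and let t₋₂ < t₋₁ < t₀ < t₁ be real time nodes with steps k₁ = t₁ − t₀, k₀ = t₀ − t₋₁, k₋₁ = t₋₁ − t₋₂ satisfying k₁/k₀ = τ and k₀/k₋₁ = τ'. Then for every real polynomial p of degree at most 2, γ₃·(p(t₁) − p(t₀)) − γ₂·(p(t₀) − p(t₋₁)) + γ₁·(p(t₋₁) − p(t₋₂)) = 0; that is, the time-filter correction appearing in the equivalent form Φ̂ⁿ⁺¹ = Φⁿ⁺¹ + γ₃δΦⁿ⁺¹ − γ₂δΦⁿ + γ₁δΦⁿ⁻¹ annihilates quadratic polynomials. -/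
import Mathlib
set_option maxHeartbeats 1000000


/-- BDF2-TF γ-coefficients. -/
noncomputable def gamma3 (τ τ' : ℝ) : ℝ :=
  τ * τ' * (1 + τ) / ((1 + 2 * τ) * (1 + τ' * (1 + τ)))
noncomputable def gamma2 (τ τ' : ℝ) : ℝ :=
  τ ^ 2 * τ' * (1 + τ) * (1 + τ' * (2 + τ)) /
    ((1 + 2 * τ) * (1 + τ') * (1 + τ' * (1 + τ)))
noncomputable def gamma1 (τ τ' : ℝ) : ℝ :=
  τ ^ 2 * τ' ^ 3 * (1 + τ) ^ 2 / ((1 + 2 * τ) * (1 + τ') * (1 + τ' * (1 + τ)))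

/-- The time-filter correction appearing in the equivalent form
`Φ̂ⁿ⁺¹ = Φⁿ⁺¹ + γ₃δΦⁿ⁺¹ − γ₂δΦⁿ + γ₁δΦⁿ⁻¹` annihilates quadratic polynomials. -/
theorem bdf2tf_gamma_annihilates_quadratics
    (τ τ' : ℝ) (hτ : 0 < τ) (hτ' : 0 < τ')
    (tm2 tm1 t0 t1 : ℝ) (h1 : tm2 < tm1) (h2 : tm1 < t0) (h3 : t0 < t1)
    (k1 k0 km1 : ℝ) (hk1 : k1 = t1 - t0) (hk0 : k0 = t0 - tm1) (hkm1 : km1 = tm1 - tm2)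
    (hr1 : k1 / k0 = τ) (hr2 : k0 / km1 = τ')
    (p : Polynomial ℝ) (hp : p.degree ≤ 2) :
    gamma3 τ τ' * (p.eval t1 - p.eval t0) - gamma2 τ τ' * (p.eval t0 - p.eval tm1)
      + gamma1 τ τ' * (p.eval tm1 - p.eval tm2) = 0 := by
  have hk0pos : (0:ℝ) < k0 := by rw [hk0]; linarith
  have hkm1pos : (0:ℝ) < km1 := by rw [hkm1]; linarith
  have hk1e : k1 = τ * k0 := by field_simp at hr1; linarith [hr1]
  have hkm1e : km1 = k0 / τ' := by
    field_simp at hr2 ⊢; linarith [hr2]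
  have hnd : p.natDegree < 3 := by
    have h2' : p.natDegree ≤ 2 := Polynomial.natDegree_le_iff_degree_le.mpr hp
    exact Nat.lt_succ_of_le h2'
  have heval : ∀ t : ℝ, p.eval t =
      p.coeff 0 + p.coeff 1 * t + p.coeff 2 * t ^ 2 := by
    intro t
    rw [Polynomial.eval_eq_sum_range' hnd]
    simp [Finset.sum_range_succ]
  have ht1 : t1 = t0 + k1 := by rw [hk1]; ring
  have htm1 : tm1 = t0 - k0 := by rw [hk0]; ring
  have htm2 : tm2 = t0 - k0 - km1 := by rw [hkm1, hk0]; ring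
  have h12 : (0:ℝ) < 1 + 2 * τ := by linarith
  have h1τ' : (0:ℝ) < 1 + τ' := by linarith
  have h1τ'' : (0:ℝ) < 1 + τ' * (1 + τ) := by positivity
  rw [heval, heval, heval, heval, gamma3, gamma2, gamma1, ht1, htm1, htm2,
    hk1e, hkm1e]
  field_simp
  ring
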